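/- Let F be a number field of degree d = [F:ℚ], let V be a finite-dimensional F-vector space, let Λ ⊆ V be an 𝒪_F-lattice in V, and let D be a compact subset of V_∞ = V ⊗_ℚ ℝ. Then there exists a constant C > 0 (depending only on D and Λ) such that for every real number a > 0 and every nonzero integral ideal 𝔫 of 𝒪_F, the set a·D ∩ ((𝔫Λ) ∖ {0}) (intersection inside V_∞, with V embedded via x ↦ x ⊗ 1) is finite and has at most C · (a^d / N(𝔫))^{dim_F V} elements. -/

import Mathlib

open scoped TensorProduct Pointwise nonZeroDivisors
open NumberField

/-- The scalar action of `ℝ` on `V ⊗[ℚ] ℝ` through the right tensor factor. -/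
noncomputable instance tensorRealSMul (V : Type*) [AddCommGroup V] [Module ℚ V] :
    SMul ℝ (V ⊗[ℚ] ℝ) :=
  ⟨fun a x => (TensorProduct.comm ℚ V ℝ).symm (a • TensorProduct.comm ℚ V ℝ x)⟩

/-- The `ℝ`-module structure on `V ⊗[ℚ] ℝ` through the right tensor factor. -/
noncomputable instance tensorRealModule (V : Type*) [AddCommGroup V] [Module ℚ V] :
    Module ℝ (V ⊗[ℚ] ℝ) :=
  Function.Injective.module ℝ (TensorProduct.comm ℚ V ℝ).toLinearMap.toAddMonoidHom
    (TensorProduct.comm ℚ V ℝ).injective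
    (fun _ _ => (TensorProduct.comm ℚ V ℝ).apply_symm_apply _)

/-- The canonical topology on the finite-dimensional real vector space `V ⊗[ℚ] ℝ`
(the unique topology making it a topological `ℝ`-vector space). -/
noncomputable instance tensorRealTopology (V : Type*) [AddCommGroup V] [Module ℚ V] :
    TopologicalSpace (V ⊗[ℚ] ℝ) := moduleTopology ℝ (V ⊗[ℚ] ℝ)


/-- Let `F` be a number field of degree `d = [F:ℚ]`, `V` a finite-dimensional `F`-vector
space, `Λ ⊆ V` an `𝒪_F`-lattice, and `D` a compact subset of `V_∞ = V ⊗_ℚ ℝ`. Then there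
is `C > 0` (depending only on `D` and `Λ`) such that for every real `a > 0` and every
nonzero integral ideal `𝔫`, the set `a•D ∩ ((𝔫Λ) ∖ {0})` (inside `V_∞`, with `V` embedded
via `x ↦ x ⊗ 1`) is finite with at most `C · (a ^ d / N(𝔫)) ^ (dim_F V)` elements. -/
instance tensorRealIsModuleTopology (V : Type*) [AddCommGroup V] [Module ℚ V] :
    IsModuleTopology ℝ (V ⊗[ℚ] ℝ) := ⟨rfl⟩

lemma tensorReal_smul_tmul {V : Type*} [AddCommGroup V] [Module ℚ V] (a : ℝ) (v : V) (t : ℝ) :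
    a • (v ⊗ₜ[ℚ] t) = v ⊗ₜ[ℚ] (a * t) := by
  show (TensorProduct.comm ℚ V ℝ).symm (a • (TensorProduct.comm ℚ V ℝ (v ⊗ₜ t))) = _
  rw [TensorProduct.comm_tmul, TensorProduct.smul_tmul', smul_eq_mul,
    TensorProduct.comm_symm_tmul]

noncomputable def extendR {V : Type*} [AddCommGroup V] [Module ℚ V] (f : V →ₗ[ℚ] ℝ) :
    (V ⊗[ℚ] ℝ) →ₗ[ℝ] ℝ where
  toFun := TensorProduct.lift (LinearMap.mk₂ ℚ (fun v t => t * f v)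
    (fun v w t => by simp [mul_add])
    (fun q v t => by simp [Rat.smul_def]; ring)
    (fun v t s => by simp [add_mul])
    (fun q v t => by simp [Rat.smul_def]; ring))
  map_add' := map_add _
  map_smul' := by
    intro a x
    simp only [RingHom.id_apply]
    induction x using TensorProduct.induction_on with
    | zero => simp
    | tmul v t =>
        rw [tensorReal_smul_tmul]
        simp only [TensorProduct.lift.tmul, LinearMap.mk₂_apply, smul_eq_mul]
        ring
    | add x y hx hy => rw [smul_add, map_add, map_add, hx, hy, smul_add]

lemma extendR_tmul {V : Type*} [AddCommGroup V] [Module ℚ V] (f : V →ₗ[ℚ] ℝ) (v : V) (t : ℝ) :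
    extendR f (v ⊗ₜ[ℚ] t) = t * f v := rfl

lemma counting_lemma {X ι : Type*} [Fintype ι] [Nonempty ι] (S : Set X) (g : ι → X → ℝ)
    {δ ρ : ℝ} (hδ : 0 < δ) (hδρ : δ ≤ ρ)
    (hbound : ∀ x ∈ S, ∀ i, |g i x| ≤ ρ)
    (hsep : ∀ x ∈ S, ∀ y ∈ S, x ≠ y → ∃ i, δ ≤ |g i x - g i y|) :
    S.Finite ∧ (S.ncard : ℝ) ≤ (7 * ρ / δ) ^ (Fintype.card ι) := by
  classical
  have hρ : 0 < ρ := lt_of_lt_of_le hδ hδρ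
  set B : ℤ := ⌈2 * ρ / δ⌉ with hB
  have hBle : (2 : ℝ) * ρ / δ ≤ B := Int.le_ceil _
  set Φ : X → ι → ℤ := fun x i => ⌊g i x / (δ / 2)⌋ with hΦ
  have hinj : Set.InjOn Φ S := by
    intro x hx y hy hxy
    by_contra hne
    obtain ⟨i, hi⟩ := hsep x hx y hy hne
    have h1 : |g i x / (δ / 2) - g i y / (δ / 2)| < 1 :=
      Int.abs_sub_lt_one_of_floor_eq_floor (congrFun hxy i)
    have hpos : (0:ℝ) < δ / 2 := by linarith
    rw [div_sub_div_same, abs_div, abs_of_pos hpos, div_lt_one hpos] at h1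
    linarith
  have hmaps : ∀ x ∈ S, ∀ i, Φ x i ∈ Finset.Icc (-B) B := by
    intro x hx i
    have h2 : |g i x / (δ / 2)| ≤ 2 * ρ / δ := by
      have hpos : (0:ℝ) < δ / 2 := by linarith
      rw [abs_div, abs_of_pos hpos, div_le_div_iff₀ hpos hδ]
      have := hbound x hx i
      nlinarith
    rw [Finset.mem_Icc]
    constructor
    · refine Int.le_floor.mpr ?_
      have : -(2 * ρ / δ) ≤ g i x / (δ / 2) := neg_le_of_abs_le h2
      push_cast
      linarith
    · calc Φ x i ≤ ⌊(B : ℝ)⌋ := Int.floor_le_floor (le_trans (le_of_abs_le h2) hBle)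
        _ = B := Int.floor_intCast B
  have hssub : Φ '' S ⊆ ↑(Fintype.piFinset fun _ : ι => Finset.Icc (-B) B) := by
    rintro _ ⟨x, hx, rfl⟩
    simp only [Finset.coe_sort_coe, Fintype.mem_piFinset, Finset.mem_coe]
    exact fun i => hmaps x hx i
  have hfin : S.Finite :=
    Set.Finite.of_finite_image (Set.Finite.subset (Finset.finite_toSet _) hssub) hinj
  refine ⟨hfin, ?_⟩
  have h1' : 1 ≤ ρ / δ := (one_le_div hδ).mpr hδρ
  have hB0 : (0 : ℤ) ≤ B := Int.ceil_nonneg (by positivity)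
  calc (S.ncard : ℝ) = ((Φ '' S).ncard : ℝ) := by rw [Set.ncard_image_of_injOn hinj]
    _ ≤ (((Fintype.piFinset fun _ : ι => Finset.Icc (-B) B) : Finset (ι → ℤ)).card : ℝ) := by
        have := Set.ncard_le_ncard hssub (Finset.finite_toSet _)
        rw [Set.ncard_coe_finset] at this
        exact_mod_cast this
    _ = (((B + 1 - -B).toNat : ℝ)) ^ Fintype.card ι := by
        rw [Fintype.card_piFinset]
        simp [Int.card_Icc]
    _ ≤ (7 * ρ / δ) ^ Fintype.card ι := by
        apply pow_le_pow_left₀ (by positivity)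
        have hB1 : (B : ℝ) ≤ 2 * ρ / δ + 1 := le_of_lt (Int.ceil_lt_add_one _)
        have htn : ((B + 1 - -B).toNat : ℝ) = 2 * (B : ℝ) + 1 := by
          have h0 : ((B + 1 - -B).toNat : ℤ) = 2 * B + 1 := by
            rw [Int.toNat_of_nonneg (by omega)]; ring
          have h1 : (((B + 1 - -B).toNat : ℤ) : ℝ) = ((2 * B + 1 : ℤ) : ℝ) := by rw [h0]
          push_cast at h1 ⊢
          linarith
        rw [htn]
        have h2 : 2 * ρ / δ = 2 * (ρ / δ) := by ring
        have h7 : 7 * ρ / δ = 7 * (ρ / δ) := by ring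
        rw [h2] at hB1
        rw [h7]
        linarith


set_option maxHeartbeats 8000000 in
theorem stmt_2 (F : Type*) [Field F] [NumberField F]
    (V : Type*) [AddCommGroup V] [Module F V] [FiniteDimensional F V]
    [Module ℚ V] [IsScalarTower ℚ F V]
    [Module (𝓞 F) V] [IsScalarTower (𝓞 F) F V]
    (Λ : Submodule (𝓞 F) V) (hΛfg : Λ.FG) (hΛspan : Submodule.span F (Λ : Set V) = ⊤)
    (D : Set (V ⊗[ℚ] ℝ)) (hD : IsCompact D) :
    ∃ C : ℝ, 0 < C ∧ ∀ a : ℝ, 0 < a → ∀ 𝔫 : Ideal (𝓞 F), 𝔫 ≠ 0 →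
      (a • D ∩ ((fun x : V => x ⊗ₜ[ℚ] (1 : ℝ)) ''
        (((𝔫 • Λ : Submodule (𝓞 F) V) : Set V) \ {0}))).Finite ∧
      ((a • D ∩ ((fun x : V => x ⊗ₜ[ℚ] (1 : ℝ)) ''
        (((𝔫 • Λ : Submodule (𝓞 F) V) : Set V) \ {0}))).ncard : ℝ) ≤
        C * (a ^ (Module.finrank ℚ F) / (Ideal.absNorm 𝔫 : ℝ)) ^ (Module.finrank F V) := by
  classical
  have hd : 0 < Module.finrank ℚ F := Module.finrank_pos
  set d := Module.finrank ℚ F with hd_def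
  set n := Module.finrank F V with hn_def
  let e : Module.Basis (Fin n) F V := Module.finBasis F V
  let bF : Module.Basis (Fin d) ℚ F := Module.finBasis ℚ F
  let φ : Fin n → V →ₗ[𝓞 F] F := fun i => (e.coord i).restrictScalars (𝓞 F)
  obtain ⟨s, hs⟩ := hΛfg
  obtain ⟨b, hb⟩ := IsLocalization.exist_integer_multiples_of_finite (𝓞 F)⁰
      (fun p : Fin n × s => φ p.1 (p.2 : V))
  -- b clears denominators of all coordinates of elements of Λ
  have hbint : ∀ i, ∀ u ∈ Λ, ∃ y : 𝓞 F,
      algebraMap (𝓞 F) F y = (b : 𝓞 F) • φ i u := by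
    intro i u hu
    have hle : Λ ≤ Submodule.comap ((b : 𝓞 F) • φ i)
        (LinearMap.range (Algebra.linearMap (𝓞 F) F)) := by
      rw [← hs, Submodule.span_le]
      intro x hx
      obtain ⟨y, hy⟩ := hb (i, ⟨x, hx⟩)
      exact ⟨y, hy⟩
    obtain ⟨y, hy⟩ := hle hu
    exact ⟨y, hy⟩
  have hkey : ∀ (𝔫 : Ideal (𝓞 F)) (i : Fin n), ∀ v ∈ (𝔫 • Λ : Submodule (𝓞 F) V),
      ∃ w ∈ 𝔫, algebraMap (𝓞 F) F w = (b : 𝓞 F) • φ i v := by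
    intro 𝔫 i v hv
    have h1 : φ i v ∈ 𝔫 • (Λ.map (φ i)) := by
      rw [← Submodule.map_smul'']
      exact Submodule.mem_map_of_mem hv
    refine Submodule.smul_induction_on h1 ?_ ?_
    · rintro r hr z hz
      obtain ⟨u, hu, rfl⟩ := hz
      obtain ⟨y, hy⟩ := hbint i u hu
      refine ⟨r * y, Ideal.mul_mem_right _ _ hr, ?_⟩
      rw [smul_comm, ← hy, Algebra.smul_def, map_mul]
    · rintro z₁ z₂ ⟨w₁, hw₁, e₁⟩ ⟨w₂, hw₂, e₂⟩
      exact ⟨w₁ + w₂, Ideal.add_mem _ hw₁ hw₂, by rw [map_add, e₁, e₂, smul_add]⟩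
  -- norm bound constants
  set β : F := algebraMap (𝓞 F) F (b : 𝓞 F) with hβdef
  obtain ⟨A, hA⟩ : ∃ A : Fin d → Fin d → Fin d → ℚ,
      ∀ k p q, A k p q = bF.repr (β * bF k * bF q) p := ⟨_, fun _ _ _ => rfl⟩
  obtain ⟨K₀, hK₀def⟩ : ∃ K₀ : ℚ, K₀ = 1 + ∑ k, ∑ p, ∑ q, |A k p q| := ⟨_, rfl⟩
  have hK₀ : 1 ≤ K₀ := by rw [hK₀def]; exact le_add_of_nonneg_right (by positivity)
  obtain ⟨Kq, hKqdef⟩ : ∃ Kq : ℚ, Kq = (Nat.factorial d : ℚ) * K₀ ^ d := ⟨_, rfl⟩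
  have hKq : 1 ≤ Kq := by
    rw [hKqdef]
    have h1 : (1:ℚ) ≤ (Nat.factorial d : ℚ) := by
      exact_mod_cast Nat.one_le_iff_ne_zero.mpr (Nat.factorial_ne_zero d)
    have h2 : (1:ℚ) ≤ K₀ ^ d := one_le_pow₀ hK₀
    nlinarith
  have hnorm : ∀ c : F, ∃ k : Fin d, (|Algebra.norm ℚ (β * c)| : ℚ) ≤ Kq * |bF.repr c k| ^ d := by
    intro c
    have hne : (Finset.univ : Finset (Fin d)).Nonempty := ⟨⟨0, hd⟩, Finset.mem_univ _⟩
    obtain ⟨k, -, hk⟩ := Finset.exists_mem_eq_sup' hne (fun k => |bF.repr c k|)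
    set m : ℚ := Finset.univ.sup' hne (fun k => |bF.repr c k|) with hm
    have hm0 : 0 ≤ m := hk ▸ abs_nonneg _
    have hmk : ∀ j, |bF.repr c j| ≤ m := fun j => Finset.le_sup' (fun k => |bF.repr c k|) (Finset.mem_univ j)
    have hentry : ∀ p q, Algebra.leftMulMatrix bF (β * c) p q = ∑ j, bF.repr c j * A j p q := by
      intro p q
      rw [Algebra.leftMulMatrix_eq_repr_mul]
      have hc : β * c * bF q = ∑ j, bF.repr c j • (β * bF j * bF q) := by
        conv_lhs => rw [← Module.Basis.sum_repr bF c]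
        rw [Finset.mul_sum, Finset.sum_mul]
        exact Finset.sum_congr rfl fun j _ => by rw [mul_smul_comm, smul_mul_assoc]
      rw [hc, map_sum, Finset.sum_apply']
      exact Finset.sum_congr rfl fun j _ => by
        rw [map_smul, Finsupp.smul_apply, smul_eq_mul, hA]
    have hsumA : ∀ p q, (∑ j, |A j p q|) ≤ K₀ := by
      intro p q
      have h1 : (∑ j, |A j p q|) ≤ ∑ j, ∑ p', ∑ q', |A j p' q'| := by
        apply Finset.sum_le_sum
        intro j _
        calc |A j p q| ≤ ∑ q', |A j p q'| :=
              Finset.single_le_sum (f := fun q' => |A j p q'|)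
                (fun _ _ => abs_nonneg _) (Finset.mem_univ q)
          _ ≤ ∑ p', ∑ q', |A j p' q'| :=
              Finset.single_le_sum (f := fun p' => ∑ q', |A j p' q'|)
                (fun _ _ => by positivity) (Finset.mem_univ p)
      rw [hK₀def]; linarith
    have hMb : ∀ p q, |Algebra.leftMulMatrix bF (β * c) p q| ≤ K₀ * m := by
      intro p q
      rw [hentry]
      calc |∑ j, bF.repr c j * A j p q| ≤ ∑ j, |bF.repr c j * A j p q| :=
            Finset.abs_sum_le_sum_abs _ _
        _ ≤ ∑ j, |A j p q| * m := by
            apply Finset.sum_le_sum; intro j _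
            rw [abs_mul, mul_comm]
            exact mul_le_mul_of_nonneg_left (hmk j) (abs_nonneg _)
        _ = (∑ j, |A j p q|) * m := by rw [Finset.sum_mul]
        _ ≤ K₀ * m := mul_le_mul_of_nonneg_right (hsumA p q) hm0
    refine ⟨k, ?_⟩
    have hdet := Matrix.det_le (A := Algebra.leftMulMatrix bF (β * c))
      (abv := AbsoluteValue.abs) (x := K₀ * m) (fun p q => hMb p q)
    rw [Algebra.norm_eq_matrix_det bF]
    calc |(Algebra.leftMulMatrix bF (β * c)).det|
        ≤ Nat.factorial (Fintype.card (Fin d)) • (K₀ * m) ^ (Fintype.card (Fin d)) := hdet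
      _ = Kq * m ^ d := by
          rw [Fintype.card_fin, nsmul_eq_mul, mul_pow, hKqdef]; ring
      _ = Kq * |bF.repr c k| ^ d := by rw [← hk]
  -- the ℚ-linear functionals and their real extensions
  let f : Fin n × Fin d → V →ₗ[ℚ] ℚ :=
    fun p => (bF.coord p.2) ∘ₗ ((e.coord p.1).restrictScalars ℚ)
  let g : Fin n × Fin d → (V ⊗[ℚ] ℝ) →ₗ[ℝ] ℝ :=
    fun p => extendR ((Algebra.linearMap ℚ ℝ) ∘ₗ f p)
  have hg_tmul : ∀ p (v : V), g p (v ⊗ₜ[ℚ] (1:ℝ)) = ((f p v : ℚ) : ℝ) := by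
    intro p v
    show (1:ℝ) * _ = _
    rw [one_mul]
    rfl
  have hg_cont : ∀ p, Continuous (g p) := fun p =>
    IsModuleTopology.continuous_of_linearMap _
  have hRex : ∀ p : Fin n × Fin d, ∃ Rp : ℝ, ∀ x ∈ D, |g p x| ≤ Rp := by
    intro p
    obtain ⟨Rp, hRp⟩ := (hD.image ((hg_cont p).abs)).bddAbove
    exact ⟨Rp, fun x hx => hRp (Set.mem_image_of_mem _ hx)⟩
  choose Rp hRp using hRex
  obtain ⟨R, hR1, hRb⟩ : ∃ R : ℝ, 1 ≤ R ∧ ∀ x ∈ D, ∀ p, |g p x| ≤ R := by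
    refine ⟨1 + ∑ p, |Rp p|, le_add_of_nonneg_right (by positivity), ?_⟩
    intro x hx p
    have h1 : |g p x| ≤ Rp p := hRp p x hx
    have h2 : |Rp p| ≤ ∑ q, |Rp q| :=
      Finset.single_le_sum (f := fun q => |Rp q|) (fun _ _ => abs_nonneg _) (Finset.mem_univ p)
    have h3 : Rp p ≤ |Rp p| := le_abs_self _
    linarith
  obtain ⟨KR, hKRdef⟩ : ∃ KR : ℝ, KR = (Kq : ℝ) := ⟨_, rfl⟩
  have hKR1 : (1:ℝ) ≤ KR := by rw [hKRdef]; exact_mod_cast hKq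
  have hKR0 : (0:ℝ) < KR := lt_of_lt_of_le one_pos hKR1
  have hdne : (d : ℝ) ≠ 0 := by exact_mod_cast hd.ne'
  have hcore : ∀ (𝔫 : Ideal (𝓞 F)), ∀ u ∈ (𝔫 • Λ : Submodule (𝓞 F) V), u ≠ 0 →
      ∃ p : Fin n × Fin d,
        ((Ideal.absNorm 𝔫 : ℝ) / KR) ^ ((d : ℝ)⁻¹) ≤ |((f p u : ℚ) : ℝ)| := by
    intro 𝔫 u hu hu0
    have hex : ∃ i, e.repr u i ≠ 0 := by
      by_contra hcon
      push_neg at hcon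
      exact hu0 (e.repr.map_eq_zero_iff.mp (Finsupp.ext hcon))
    obtain ⟨i, hi⟩ := hex
    obtain ⟨w, hw𝔫, hw⟩ := hkey 𝔫 i u hu
    have hφ : φ i u = e.repr u i := by
      show e.coord i u = _
      rw [Module.Basis.coord_apply]
    have hw' : algebraMap (𝓞 F) F w = β * (e.repr u i) := by
      rw [hw, Algebra.smul_def, hφ, hβdef]
    have hβ0 : β ≠ 0 := by
      rw [hβdef]
      exact (map_ne_zero_iff _ (IsFractionRing.injective (𝓞 F) F)).mpr
        (nonZeroDivisors.coe_ne_zero b)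
    have hwne : w ≠ 0 := by
      intro h0
      rw [h0, map_zero] at hw'
      rcases mul_eq_zero.mp hw'.symm with h | h
      · exact hβ0 h
      · exact hi h
    have h1 : (Ideal.absNorm 𝔫 : ℤ) ∣ Algebra.norm ℤ w := Ideal.absNorm_dvd_norm_of_mem hw𝔫
    have h2 : Algebra.norm ℤ w ≠ 0 := by
      rw [Algebra.norm_ne_zero_iff]
      exact hwne
    have h3 : (Ideal.absNorm 𝔫 : ℤ) ≤ |Algebra.norm ℤ w| :=
      Int.le_of_dvd (abs_pos.mpr h2) ((dvd_abs _ _).mpr h1)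
    have h4 : (Ideal.absNorm 𝔫 : ℚ) ≤ |Algebra.norm ℚ (algebraMap (𝓞 F) F w)| := by
      rw [← RingOfIntegers.coe_eq_algebraMap, ← Algebra.coe_norm_int, ← Int.cast_abs]
      exact_mod_cast h3
    obtain ⟨k, hk⟩ := hnorm (e.repr u i)
    rw [hw'] at h4
    have h5 : (Ideal.absNorm 𝔫 : ℚ) ≤ Kq * |bF.repr (e.repr u i) k| ^ d := le_trans h4 hk
    refine ⟨(i, k), ?_⟩
    have hfik : f (i, k) u = bF.repr (e.repr u i) k := by
      show bF.coord k (e.coord i u) = _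
      rw [Module.Basis.coord_apply, Module.Basis.coord_apply]
    rw [hfik]
    have h5' : (Ideal.absNorm 𝔫 : ℚ) ≤ |bF.repr (e.repr u i) k| ^ d * Kq := by linarith
    have h6 : (Ideal.absNorm 𝔫 : ℝ) / KR ≤ |((bF.repr (e.repr u i) k : ℚ) : ℝ)| ^ d := by
      rw [div_le_iff₀ hKR0, hKRdef, ← Rat.cast_abs]
      exact_mod_cast h5'
    calc ((Ideal.absNorm 𝔫 : ℝ) / KR) ^ ((d : ℝ)⁻¹)
        ≤ (|((bF.repr (e.repr u i) k : ℚ) : ℝ)| ^ d) ^ ((d : ℝ)⁻¹) :=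
          Real.rpow_le_rpow (by positivity) h6 (by positivity)
      _ = |((bF.repr (e.repr u i) k : ℚ) : ℝ)| := by
          rw [← Real.rpow_natCast |((bF.repr (e.repr u i) k : ℚ) : ℝ)| d,
            ← Real.rpow_mul (abs_nonneg _), mul_inv_cancel₀ hdne, Real.rpow_one]
  refine ⟨(7 * R) ^ (n * d) * KR ^ n, by positivity, ?_⟩
  intro a ha 𝔫 h𝔫
  have hNpos : (0:ℝ) < (Ideal.absNorm 𝔫 : ℝ) := by
    have hne0 : Ideal.absNorm 𝔫 ≠ 0 := by
      rw [Ne, Ideal.absNorm_eq_zero_iff, ← Submodule.zero_eq_bot]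
      exact h𝔫
    exact_mod_cast Nat.pos_of_ne_zero hne0
  obtain ⟨δ, hδdef⟩ : ∃ δ : ℝ, δ = ((Ideal.absNorm 𝔫 : ℝ) / KR) ^ ((d : ℝ)⁻¹) := ⟨_, rfl⟩
  have hδpos : 0 < δ := by rw [hδdef]; exact Real.rpow_pos_of_pos (by positivity) _
  set S := a • D ∩ ((fun x : V => x ⊗ₜ[ℚ] (1 : ℝ)) ''
      (((𝔫 • Λ : Submodule (𝓞 F) V) : Set V) \ {0})) with hSdef
  rcases Set.eq_empty_or_nonempty S with hSe | hSne
  · rw [hSe]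
    refine ⟨Set.finite_empty, ?_⟩
    rw [Set.ncard_empty, Nat.cast_zero]
    positivity
  · obtain ⟨x₀, hx₀⟩ := hSne
    obtain ⟨hx₀D, v₀, hv₀mem, hx₀eq⟩ := hx₀
    obtain ⟨hv₀Λ, hv₀0'⟩ := hv₀mem
    have hv₀0 : v₀ ≠ 0 := by simpa using hv₀0'
    haveI : Nontrivial V := nontrivial_of_ne v₀ 0 hv₀0
    have hn0 : 0 < n := Module.finrank_pos
    haveI : Nonempty (Fin n × Fin d) := ⟨(⟨0, hn0⟩, ⟨0, hd⟩)⟩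
    have hboundS : ∀ x ∈ S, ∀ p : Fin n × Fin d, |g p x| ≤ a * R := by
      intro x hx p
      obtain ⟨y, hy, rfl⟩ := hx.1
      rw [map_smul, smul_eq_mul, abs_mul, abs_of_pos ha]
      exact mul_le_mul_of_nonneg_left (hRb y hy p) ha.le
    have hsepS : ∀ x ∈ S, ∀ y ∈ S, x ≠ y → ∃ p : Fin n × Fin d,
        δ ≤ |g p x - g p y| := by
      intro x hx y hy hxy
      obtain ⟨v, hvm, rfl⟩ := hx.2
      obtain ⟨w, hwm, rfl⟩ := hy.2
      have hvw : v - w ≠ 0 := by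
        intro h
        apply hxy
        rw [sub_eq_zero] at h
        rw [h]
      obtain ⟨p, hp⟩ := hcore 𝔫 (v - w) (Submodule.sub_mem _ hvm.1 hwm.1) hvw
      refine ⟨p, ?_⟩
      rw [hδdef]
      calc ((Ideal.absNorm 𝔫 : ℝ) / KR) ^ ((d : ℝ)⁻¹) ≤ |((f p (v - w) : ℚ) : ℝ)| := hp
        _ = |g p (v ⊗ₜ[ℚ] (1:ℝ)) - g p (w ⊗ₜ[ℚ] (1:ℝ))| := by
            rw [hg_tmul, hg_tmul, map_sub, Rat.cast_sub]
    have hδρ : δ ≤ a * R := by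
      obtain ⟨p, hp⟩ := hcore 𝔫 v₀ hv₀Λ hv₀0
      have hx₀S : x₀ ∈ S := ⟨hx₀D, v₀, ⟨hv₀Λ, hv₀0'⟩, hx₀eq⟩
      calc δ ≤ |((f p v₀ : ℚ) : ℝ)| := by rw [hδdef]; exact hp
        _ = |g p (v₀ ⊗ₜ[ℚ] (1:ℝ))| := by rw [hg_tmul]
        _ ≤ a * R := by
            have h := hboundS x₀ hx₀S p
            rw [← hx₀eq] at h
            exact h
    obtain ⟨hfin, hcard⟩ := counting_lemma S (fun p x => g p x) hδpos hδρ hboundS hsepS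
    refine ⟨hfin, le_trans hcard ?_⟩
    rw [Fintype.card_prod, Fintype.card_fin, Fintype.card_fin]
    have hNne : (Ideal.absNorm 𝔫 : ℝ) ≠ 0 := hNpos.ne'
    have hδpow : δ ^ (n * d) = ((Ideal.absNorm 𝔫 : ℝ) / KR) ^ n := by
      rw [hδdef, ← Real.rpow_natCast (((Ideal.absNorm 𝔫 : ℝ) / KR) ^ ((d:ℝ)⁻¹)) (n * d),
        ← Real.rpow_mul (by positivity), ← Real.rpow_natCast ((Ideal.absNorm 𝔫 : ℝ) / KR) n]
      congr 1
      push_cast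
      field_simp
    have heq : (7 * (a * R) / δ) ^ (n * d) =
        (7 * R) ^ (n * d) * KR ^ n * (a ^ d / (Ideal.absNorm 𝔫 : ℝ)) ^ n := by
      rw [div_pow, hδpow, div_pow, div_pow]
      field_simp
      ring
    rw [heq]
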